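/- Let Σ be a finite set, μ a probability distribution on Σ with full support, (H,+) a finite abelian group, and d ∈ ℕ with d ≥ 1. Suppose f : Σ^n → ℂ is 1-bounded, P ∈ 𝒫(H,n,Σ), and L : Σ^n → ℂ has degree at most d and ‖L‖₂ ≤ 1 (over μ^⊗n). If |⟨f, P·L⟩| ≥ δ, then, choosing a random restriction (I,y) with alive-probability 1/(2d), with probability at least δ²/(2e) over (I,y) we have |⟨f_{\bar I→y}, P_{\bar I→y}⟩| ≥ δ/√(2e), where the inner product of the restricted functions is over μ^{⊗I}. -/

import Mathlib

open scoped Classical BigOperators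

noncomputable section

/-- Product weight `μ^{⊗n}(x) = ∏ᵢ μ(xᵢ)` on `Ω^n`. -/
def wtp {Ω : Type*} [Fintype Ω] (μ : Ω → ℝ) {n : ℕ} (x : Fin n → Ω) : ℝ :=
  ∏ i, μ (x i)

/-- Inner product `⟨f,g⟩ = E_{x∼μ^{⊗n}}[f(x)·conj(g(x))]` on functions `Ω^n → ℂ`. -/
def innerμ {Ω : Type*} [Fintype Ω] (μ : Ω → ℝ) {n : ℕ} (f g : (Fin n → Ω) → ℂ) : ℂ :=
  ∑ x, (wtp μ x : ℂ) * f x * starRingEnd ℂ (g x)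

/-- `g` is an `S`-junta: it depends only on the coordinates in `S`. -/
def IsJunta {Ω : Type*} {n : ℕ} (g : (Fin n → Ω) → ℂ) (S : Finset (Fin n)) : Prop :=
  ∀ x y : Fin n → Ω, (∀ i ∈ S, x i = y i) → g x = g y

/-- The squared `L²(μ^{⊗n})`-norm of `g`. -/
def norm2sq {Ω : Type*} [Fintype Ω] (μ : Ω → ℝ) {n : ℕ} (g : (Fin n → Ω) → ℂ) : ℝ :=
  ∑ x, wtp μ x * Complex.normSq (g x)

/-- `L` has degree at most `d`: it is a sum of `S`-juntas over sets `S` of size at most `d`. -/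
def DegreeLE {Ω : Type*} [Fintype Ω] {n : ℕ} (L : (Fin n → Ω) → ℂ) (d : ℕ) : Prop :=
  ∃ F : Finset (Fin n) → ((Fin n → Ω) → ℂ),
    (∀ S, IsJunta (F S) S) ∧ (∀ S : Finset (Fin n), d < S.card → F S = 0) ∧ L = ∑ S, F S

/-- The class `𝒫(H,n,Ω)` of product functions: `P(x) = c·∏ᵢ uᵢ(xᵢ)` where `|c| = 1` and each
`uᵢ` takes values in the `|H|`-th roots of unity. -/
def IsProductFn (H : Type*) [Fintype H] {Ω : Type*} {n : ℕ}
    (P : (Fin n → Ω) → ℂ) : Prop :=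
  ∃ (c : ℂ) (u : Fin n → Ω → ℂ), ‖c‖ = 1 ∧
    (∀ i s, u i s ^ Fintype.card H = 1) ∧
    ∀ x, P x = c * ∏ i, u i (x i)

/-- The point of `Ω^n` agreeing with `w` on `I` and with `y` outside `I`. -/
def mergeF {Ω : Type*} {n : ℕ} (I : Finset (Fin n)) (w : {i // i ∈ I} → Ω)
    (y : Fin n → Ω) : Fin n → Ω :=
  fun i => if h : i ∈ I then w ⟨i, h⟩ else y i

section CorrAuxSection

set_option linter.unusedSectionVars false
set_option linter.unusedVariables false
set_option linter.unusedTactic false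

namespace CorrAux

variable {Ω : Type} [Fintype Ω] {n : ℕ} (μ : Ω → ℝ)

lemma mergeF_mem {I : Finset (Fin n)} (w : {i // i ∈ I} → Ω) (y : Fin n → Ω) {i : Fin n}
    (h : i ∈ I) : mergeF I w y i = w ⟨i, h⟩ := dif_pos h

lemma mergeF_not_mem {I : Finset (Fin n)} (w : {i // i ∈ I} → Ω) (y : Fin n → Ω) {i : Fin n}
    (h : i ∉ I) : mergeF I w y i = y i := dif_neg h

lemma mergeF_merge (I : Finset (Fin n)) (w : {i // i ∈ I} → Ω) (x : Fin n → Ω) :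
    mergeF I (fun i => x i) (mergeF I w x) = x := by
  funext k
  by_cases hk : k ∈ I
  · rw [mergeF_mem _ _ hk]
  · rw [mergeF_not_mem _ _ hk, mergeF_not_mem _ _ hk]

/-- averaging the coordinates in `I`. -/
def avgF (I : Finset (Fin n)) (h : (Fin n → Ω) → ℂ) : (Fin n → Ω) → ℂ :=
  fun x => ∑ w : {i // i ∈ I} → Ω, ((∏ i, μ (w i) : ℝ) : ℂ) * h (mergeF I w x)

lemma sum_prod_weights (hsum : ∑ a, μ a = 1) (ι : Type) [Fintype ι] [DecidableEq ι] :
    ∑ w : ι → Ω, ∏ i, μ (w i) = 1 := by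
  have h := Finset.prod_univ_sum (fun _ : ι => (Finset.univ : Finset Ω)) (fun _ a => μ a)
  rw [Fintype.piFinset_univ] at h
  rw [← h]
  simp [hsum]

lemma wtp_mergeF (I : Finset (Fin n)) (w : {i // i ∈ I} → Ω) (x : Fin n → Ω) :
    wtp μ (mergeF I w x) * ∏ i : {i // i ∈ I}, μ (x i) =
    wtp μ x * ∏ i : {i // i ∈ I}, μ (w i) := by
  have h1 : ∀ z : Fin n → Ω, wtp μ z = (∏ i ∈ I, μ (z i)) * ∏ i ∈ Iᶜ, μ (z i) := fun z =>
    (Finset.prod_mul_prod_compl I _).symm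
  have hsub : ∀ z : Fin n → Ω, (∏ i : {i // i ∈ I}, μ (z i)) = ∏ i ∈ I, μ (z i) := fun z =>
    Finset.prod_coe_sort I (fun i => μ (z i))
  have hIm : ∏ i ∈ I, μ (mergeF I w x i) = ∏ i : {i // i ∈ I}, μ (w i) := by
    rw [← hsub (mergeF I w x)]
    exact Fintype.prod_congr _ _ fun i => by rw [mergeF_mem _ _ i.2]
  have hIc : ∏ i ∈ Iᶜ, μ (mergeF I w x i) = ∏ i ∈ Iᶜ, μ (x i) :=
    Finset.prod_congr rfl fun i hi => by rw [mergeF_not_mem _ _ (Finset.mem_compl.mp hi)]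
  rw [h1, h1, hIm, hIc, hsub]
  ring

lemma avgF_empty (h : (Fin n → Ω) → ℂ) : avgF μ ∅ h = h := by
  funext x
  simp only [avgF]
  haveI : IsEmpty {i : Fin n // i ∈ (∅ : Finset (Fin n))} := ⟨fun i => Finset.notMem_empty _ i.2⟩
  rw [Fintype.sum_unique]
  have hx : mergeF (∅ : Finset (Fin n)) default x = x := by
    funext i; exact mergeF_not_mem _ _ (by simp)
  rw [hx]
  simp

lemma isJunta_univ (g : (Fin n → Ω) → ℂ) : IsJunta g Finset.univ :=
  fun x y hxy => congrArg g (funext fun i => hxy i (Finset.mem_univ i))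

lemma isJunta_avgF {h : (Fin n → Ω) → ℂ} {T : Finset (Fin n)} (hh : IsJunta h T)
    (I : Finset (Fin n)) : IsJunta (avgF μ I h) (T \ I) := by
  intro x y hxy
  simp only [avgF]
  refine Finset.sum_congr rfl fun w _ => ?_
  congr 1
  refine hh _ _ fun i hi => ?_
  by_cases hiI : i ∈ I
  · rw [mergeF_mem _ _ hiI, mergeF_mem _ _ hiI]
  · rw [mergeF_not_mem _ _ hiI, mergeF_not_mem _ _ hiI]
    exact hxy i (Finset.mem_sdiff.mpr ⟨hi, hiI⟩)

lemma avgF_of_junta (hsum : ∑ a, μ a = 1) {h : (Fin n → Ω) → ℂ} {T : Finset (Fin n)}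
    (hh : IsJunta h T) {I : Finset (Fin n)} (hdisj : Disjoint I T) : avgF μ I h = h := by
  funext x
  simp only [avgF]
  have hmerge : ∀ w : {i // i ∈ I} → Ω, h (mergeF I w x) = h x := by
    intro w
    refine hh _ _ fun i hi => ?_
    exact mergeF_not_mem _ _ fun hiI => (Finset.disjoint_left.mp hdisj hiI) hi
  simp_rw [hmerge]
  rw [← Finset.sum_mul, ← Complex.ofReal_sum, sum_prod_weights μ hsum, Complex.ofReal_one, one_mul]

lemma avgF_zero (I : Finset (Fin n)) : avgF μ I (0 : (Fin n → Ω) → ℂ) = 0 := by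
  funext x
  simp [avgF]

lemma avgF_sum (I : Finset (Fin n)) {α : Type*} (A : Finset α)
    (F : α → (Fin n → Ω) → ℂ) :
    avgF μ I (∑ a ∈ A, F a) = ∑ a ∈ A, avgF μ I (F a) := by
  funext x
  simp only [avgF, Finset.sum_apply, Finset.mul_sum]
  exact Finset.sum_comm

lemma avgF_smul (I : Finset (Fin n)) (c : ℂ) (h : (Fin n → Ω) → ℂ) :
    avgF μ I (c • h) = c • avgF μ I h := by
  funext x
  simp only [avgF, Pi.smul_apply, smul_eq_mul, Finset.mul_sum]
  exact Finset.sum_congr rfl fun w _ => by ring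

def unionEquiv {I J : Finset (Fin n)} (hIJ : Disjoint I J) :
    (({i // i ∈ I} → Ω) × ({j // j ∈ J} → Ω)) ≃ ({k // k ∈ I ∪ J} → Ω) where
  toFun p k := if h : (k : Fin n) ∈ J then p.2 ⟨k, h⟩
    else p.1 ⟨k, (Finset.mem_union.mp k.2).resolve_right h⟩
  invFun u := (fun i => u ⟨i, Finset.mem_union_left J i.2⟩,
               fun j => u ⟨j, Finset.mem_union_right I j.2⟩)
  left_inv p := by
    obtain ⟨w, v⟩ := p
    refine Prod.ext ?_ ?_
    · funext i
      have hiJ : (i : Fin n) ∉ J := Finset.disjoint_left.mp hIJ i.2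
      simp only [dif_neg hiJ]
    · funext j
      simp only [dif_pos j.2]
  right_inv u := by
    funext k
    by_cases hk : (k : Fin n) ∈ J
    · simp only [dif_pos hk]
    · simp only [dif_neg hk]

lemma unionEquiv_merge {I J : Finset (Fin n)} (hIJ : Disjoint I J)
    (w : {i // i ∈ I} → Ω) (v : {j // j ∈ J} → Ω) (x : Fin n → Ω) :
    mergeF (I ∪ J) (unionEquiv hIJ (w, v)) x = mergeF J v (mergeF I w x) := by
  funext k
  by_cases hkJ : k ∈ J
  · rw [mergeF_mem _ _ (Finset.mem_union_right I hkJ), mergeF_mem _ _ hkJ]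
    show unionEquiv hIJ (w, v) ⟨k, _⟩ = v ⟨k, hkJ⟩
    simp only [unionEquiv, Equiv.coe_fn_mk]
    rw [dif_pos hkJ]
  · by_cases hkI : k ∈ I
    · rw [mergeF_mem _ _ (Finset.mem_union_left J hkI), mergeF_not_mem _ _ hkJ,
        mergeF_mem _ _ hkI]
      show unionEquiv hIJ (w, v) ⟨k, _⟩ = w ⟨k, hkI⟩
      simp only [unionEquiv, Equiv.coe_fn_mk]
      rw [dif_neg hkJ]
    · rw [mergeF_not_mem _ _ (fun hc => by
          rcases Finset.mem_union.mp hc with h | h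
          exacts [hkI h, hkJ h]),
        mergeF_not_mem _ _ hkJ, mergeF_not_mem _ _ hkI]

lemma unionEquiv_prod {I J : Finset (Fin n)} (hIJ : Disjoint I J)
    (w : {i // i ∈ I} → Ω) (v : {j // j ∈ J} → Ω) :
    ∏ k : {k // k ∈ I ∪ J}, μ (unionEquiv hIJ (w, v) k)
      = (∏ i : {i // i ∈ I}, μ (w i)) * ∏ j : {j // j ∈ J}, μ (v j) := by
  set U : Fin n → ℝ := fun k => if h : k ∈ I ∪ J then μ (unionEquiv hIJ (w, v) ⟨k, h⟩) else 1
    with hU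
  have hL : ∏ k : {k // k ∈ I ∪ J}, μ (unionEquiv hIJ (w, v) k) = ∏ k ∈ I ∪ J, U k := by
    rw [← Finset.prod_coe_sort (I ∪ J) U]
    refine Fintype.prod_congr _ _ fun k => ?_
    simp only [hU]
    rw [dif_pos k.2]
  have hI : ∏ i : {i // i ∈ I}, μ (w i) = ∏ k ∈ I, U k := by
    rw [← Finset.prod_coe_sort I U]
    refine Fintype.prod_congr _ _ fun i => ?_
    have hiJ : (i : Fin n) ∉ J := Finset.disjoint_left.mp hIJ i.2
    simp only [hU]
    rw [dif_pos (Finset.mem_union_left J i.2)]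
    show μ (w i) = μ (unionEquiv hIJ (w, v) ⟨(i : Fin n), _⟩)
    simp only [unionEquiv, Equiv.coe_fn_mk]
    rw [dif_neg hiJ]
  have hJ : ∏ j : {j // j ∈ J}, μ (v j) = ∏ k ∈ J, U k := by
    rw [← Finset.prod_coe_sort J U]
    refine Fintype.prod_congr _ _ fun j => ?_
    simp only [hU]
    rw [dif_pos (Finset.mem_union_right I j.2)]
    show μ (v j) = μ (unionEquiv hIJ (w, v) ⟨(j : Fin n), _⟩)
    simp only [unionEquiv, Equiv.coe_fn_mk]
    rw [dif_pos j.2]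
  rw [hL, hI, hJ, Finset.prod_union hIJ]

lemma avgF_avgF {I J : Finset (Fin n)} (hIJ : Disjoint I J) (h : (Fin n → Ω) → ℂ) :
    avgF μ I (avgF μ J h) = avgF μ (I ∪ J) h := by
  funext x
  show ∑ w : {i // i ∈ I} → Ω, ((∏ i, μ (w i) : ℝ) : ℂ) * avgF μ J h (mergeF I w x)
      = ∑ u : {k // k ∈ I ∪ J} → Ω, ((∏ k, μ (u k) : ℝ) : ℂ) * h (mergeF (I ∪ J) u x)
  rw [← Equiv.sum_comp (unionEquiv (Ω := Ω) hIJ)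
    (fun u : {k // k ∈ I ∪ J} → Ω => ((∏ k, μ (u k) : ℝ) : ℂ) * h (mergeF (I ∪ J) u x))]
  rw [Fintype.sum_prod_type]
  refine Finset.sum_congr rfl fun w _ => ?_
  simp only [avgF, Finset.mul_sum]
  refine Finset.sum_congr rfl fun v _ => ?_
  rw [unionEquiv_merge hIJ w v x, unionEquiv_prod μ hIJ w v]
  push_cast
  ring

lemma avgF_insert {i : Fin n} {K : Finset (Fin n)} (hiK : i ∉ K) (h : (Fin n → Ω) → ℂ) :
    avgF μ {i} (avgF μ K h) = avgF μ (insert i K) h := by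
  rw [avgF_avgF μ (Finset.disjoint_singleton_left.mpr hiK) h, ← Finset.insert_eq]

/-- Efron–Stein component. -/
def ES (S : Finset (Fin n)) (g : (Fin n → Ω) → ℂ) : (Fin n → Ω) → ℂ :=
  ∑ U ∈ S.powerset, (-1 : ℂ) ^ U.card • avgF μ (U ∪ Sᶜ) g

lemma ES_junta (S : Finset (Fin n)) (g : (Fin n → Ω) → ℂ) : IsJunta (ES μ S g) S := by
  intro x y hxy
  simp only [ES, Finset.sum_apply, Pi.smul_apply, smul_eq_mul]
  refine Finset.sum_congr rfl fun U _ => ?_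
  congr 1
  refine isJunta_avgF μ (isJunta_univ g) (U ∪ Sᶜ) x y fun i hi => ?_
  rcases Finset.mem_sdiff.mp hi with ⟨-, hiUS⟩
  refine hxy i ?_
  by_contra hiS
  exact hiUS (Finset.mem_union_right _ (Finset.mem_compl.mpr hiS))

lemma ES_sum (S : Finset (Fin n)) {α : Type*} (A : Finset α) (G : α → (Fin n → Ω) → ℂ) :
    ES μ S (∑ a ∈ A, G a) = ∑ a ∈ A, ES μ S (G a) := by
  simp only [ES]
  simp_rw [avgF_sum μ, Finset.smul_sum]
  exact Finset.sum_comm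

lemma ES_zero (S : Finset (Fin n)) : ES μ S (0 : (Fin n → Ω) → ℂ) = 0 := by
  simp [ES, avgF_zero]

lemma avgF_ES_of_mem (hsum : ∑ a, μ a = 1) {i : Fin n} {S : Finset (Fin n)} (hiS : i ∈ S)
    (g : (Fin n → Ω) → ℂ) : avgF μ {i} (ES μ S g) = 0 := by
  have hni : i ∉ S.erase i := Finset.notMem_erase i S
  simp only [ES]
  rw [avgF_sum μ]
  simp_rw [avgF_smul μ]
  have hrw : S.powerset = (insert i (S.erase i)).powerset := by rw [Finset.insert_erase hiS]
  rw [hrw, Finset.sum_powerset_insert hni, ← Finset.sum_add_distrib]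
  refine Finset.sum_eq_zero fun U hU => ?_
  rw [Finset.mem_powerset] at hU
  have hiU : i ∉ U := fun hc => hni (hU hc)
  have hiUS : i ∉ U ∪ Sᶜ := by simp [hiU, hiS]
  have t1 : avgF μ {i} (avgF μ (U ∪ Sᶜ) g) = avgF μ (insert i (U ∪ Sᶜ)) g :=
    avgF_insert μ hiUS g
  have t2 : avgF μ {i} (avgF μ (insert i U ∪ Sᶜ) g) = avgF μ (insert i U ∪ Sᶜ) g := by
    refine avgF_of_junta μ hsum (isJunta_avgF μ (isJunta_univ g) (insert i U ∪ Sᶜ)) ?_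
    refine Finset.disjoint_singleton_left.mpr ?_
    rw [Finset.mem_sdiff]
    push_neg
    intro
    exact Finset.mem_union_left _ (Finset.mem_insert_self i U)
  rw [t1, t2, Finset.card_insert_of_notMem hiU, Finset.insert_union]
  rw [pow_succ, mul_comm ((-1:ℂ) ^ U.card) (-1), neg_one_mul, neg_smul, add_neg_cancel]

lemma ES_of_junta (hsum : ∑ a, μ a = 1) {h : (Fin n → Ω) → ℂ} {T : Finset (Fin n)}
    (hh : IsJunta h T) {S : Finset (Fin n)} {i : Fin n} (hiS : i ∈ S) (hiT : i ∉ T) :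
    ES μ S h = 0 := by
  have hni : i ∉ S.erase i := Finset.notMem_erase i S
  simp only [ES]
  have hrw : S.powerset = (insert i (S.erase i)).powerset := by rw [Finset.insert_erase hiS]
  rw [hrw, Finset.sum_powerset_insert hni, ← Finset.sum_add_distrib]
  refine Finset.sum_eq_zero fun U hU => ?_
  rw [Finset.mem_powerset] at hU
  have hiU : i ∉ U := fun hc => hni (hU hc)
  have hiUS : i ∉ U ∪ Sᶜ := by simp [hiU, hiS]
  have t1 : avgF μ (insert i U ∪ Sᶜ) h = avgF μ (U ∪ Sᶜ) h := by
    rw [Finset.insert_union, ← avgF_insert μ hiUS h]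
    refine avgF_of_junta μ hsum (isJunta_avgF μ hh (U ∪ Sᶜ)) ?_
    refine Finset.disjoint_singleton_left.mpr ?_
    rw [Finset.mem_sdiff]
    push_neg
    intro hc
    exact absurd hc hiT
  rw [t1, Finset.card_insert_of_notMem hiU]
  rw [pow_succ, mul_comm ((-1:ℂ) ^ U.card) (-1), neg_one_mul, neg_smul, add_neg_cancel]

lemma sum_pow_neg_one (W : Finset (Fin n)) :
    ∑ U ∈ W.powerset, (-1 : ℂ) ^ U.card = if W = ∅ then 1 else 0 := by
  have h := Finset.sum_powerset_neg_one_pow_card (x := W)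
  have h2 : ((∑ U ∈ W.powerset, (-1 : ℤ) ^ U.card : ℤ) : ℂ)
      = ∑ U ∈ W.powerset, (-1 : ℂ) ^ U.card := by
    push_cast
    rfl
  rw [← h2, h]
  split_ifs <;> simp

lemma powerset_eq_filter (K : Finset (Fin n)) :
    K.powerset = Finset.univ.filter (fun S => S ⊆ K) := by
  ext S
  simp [Finset.mem_powerset]

lemma subset_compl_comm {I S : Finset (Fin n)} : S ⊆ Iᶜ ↔ I ⊆ Sᶜ := by
  constructor
  · intro h x hxI
    exact Finset.mem_compl.mpr fun hxS => Finset.mem_compl.mp (h hxS) hxI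
  · intro h x hxS
    exact Finset.mem_compl.mpr fun hxI => Finset.mem_compl.mp (h hxI) hxS

lemma sum_ES (hsum : ∑ a, μ a = 1) (g : (Fin n → Ω) → ℂ) :
    ∑ S : Finset (Fin n), ES μ S g = g := by
  have hinv : Function.Involutive (fun S : Finset (Fin n) => Sᶜ) := fun S => compl_compl S
  have hcompl : ∑ S : Finset (Fin n), ES μ S g
      = ∑ V : Finset (Fin n), ∑ U ∈ Vᶜ.powerset, (-1 : ℂ) ^ U.card • avgF μ (U ∪ V) g := by
    rw [← Equiv.sum_comp (Function.Involutive.toPerm _ hinv)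
      (fun S : Finset (Fin n) => ES μ S g)]
    refine Finset.sum_congr rfl fun V _ => ?_
    simp only [Function.Involutive.coe_toPerm, ES, compl_compl]
  rw [hcompl]
  have step2 : ∑ V : Finset (Fin n), ∑ U ∈ Vᶜ.powerset, (-1 : ℂ) ^ U.card • avgF μ (U ∪ V) g
      = ∑ U : Finset (Fin n), ∑ V ∈ Uᶜ.powerset, (-1 : ℂ) ^ U.card • avgF μ (U ∪ V) g := by
    simp_rw [powerset_eq_filter, Finset.sum_filter]
    rw [Finset.sum_comm]
    refine Finset.sum_congr rfl fun U _ => Finset.sum_congr rfl fun V _ => ?_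
    exact if_congr subset_compl_comm rfl rfl
  rw [step2]
  have step3 : ∀ U : Finset (Fin n),
      ∑ V ∈ Uᶜ.powerset, (-1 : ℂ) ^ U.card • avgF μ (U ∪ V) g
        = ∑ W ∈ Finset.univ.filter (fun W => U ⊆ W), (-1 : ℂ) ^ U.card • avgF μ W g := by
    intro U
    refine Finset.sum_nbij' (fun V => U ∪ V) (fun W => W \ U) ?_ ?_ ?_ ?_ ?_
    · intro V hV
      exact Finset.mem_filter.mpr ⟨Finset.mem_univ _, Finset.subset_union_left⟩
    · intro W hW
      refine Finset.mem_powerset.mpr fun x hx => ?_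
      exact Finset.mem_compl.mpr (Finset.mem_sdiff.mp hx).2
    · intro V hV
      have hdisj : Disjoint U V := Finset.disjoint_left.mpr fun x hxU hxV =>
        Finset.mem_compl.mp (Finset.mem_powerset.mp hV hxV) hxU
      exact Finset.union_sdiff_cancel_left hdisj
    · intro W hW
      exact Finset.union_sdiff_of_subset (Finset.mem_filter.mp hW).2
    · intro V _
      rfl
  rw [Finset.sum_congr rfl fun U _ => step3 U]
  have step4 : ∑ U : Finset (Fin n),
      ∑ W ∈ Finset.univ.filter (fun W => U ⊆ W), (-1 : ℂ) ^ U.card • avgF μ W g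
      = ∑ W : Finset (Fin n), (∑ U ∈ W.powerset, (-1 : ℂ) ^ U.card) • avgF μ W g := by
    simp_rw [Finset.sum_filter]
    rw [Finset.sum_comm]
    refine Finset.sum_congr rfl fun W _ => ?_
    rw [Finset.sum_smul, powerset_eq_filter, Finset.sum_filter]
  rw [step4]
  simp_rw [sum_pow_neg_one]
  rw [Fintype.sum_eq_single (∅ : Finset (Fin n))]
  · rw [if_pos rfl, one_smul, avgF_empty]
  · intro W hW
    rw [if_neg hW, zero_smul]

lemma avgF_decomp (hsum : ∑ a, μ a = 1) (I : Finset (Fin n)) (g : (Fin n → Ω) → ℂ) :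
    avgF μ I g = ∑ S ∈ Iᶜ.powerset, ES μ S g := by
  have vanish : ∀ S ∈ (Finset.univ : Finset (Finset (Fin n))), S ∉ Iᶜ.powerset →
      avgF μ I (ES μ S g) = 0 := by
    intro S _ hS
    obtain ⟨i, hiS, hiI⟩ : ∃ i ∈ S, i ∈ I := by
      rw [Finset.mem_powerset] at hS
      rcases Finset.not_subset.mp hS with ⟨i, hiS, hiC⟩
      exact ⟨i, hiS, by simpa using hiC⟩
    have hsplit : avgF μ I (ES μ S g) = avgF μ (I.erase i) (avgF μ {i} (ES μ S g)) := by
      rw [avgF_avgF μ (by simp) (ES μ S g)]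
      congr 1
      rw [Finset.union_comm, ← Finset.insert_eq, Finset.insert_erase hiI]
    rw [hsplit, avgF_ES_of_mem μ hsum hiS g, avgF_zero]
  calc avgF μ I g = avgF μ I (∑ S : Finset (Fin n), ES μ S g) := by rw [sum_ES μ hsum]
    _ = ∑ S : Finset (Fin n), avgF μ I (ES μ S g) := avgF_sum μ I _ _
    _ = ∑ S ∈ Iᶜ.powerset, avgF μ I (ES μ S g) :=
        (Finset.sum_subset (Finset.subset_univ _) vanish).symm
    _ = ∑ S ∈ Iᶜ.powerset, ES μ S g := by
        refine Finset.sum_congr rfl fun S hS => ?_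
        have hdisj : Disjoint I S := Finset.disjoint_left.mpr fun x hxI hxS =>
          Finset.mem_compl.mp (Finset.mem_powerset.mp hS hxS) hxI
        exact avgF_of_junta μ hsum (ES_junta μ S g) hdisj

/-- the weight-preserving involution swapping the `I`-part. -/
def mergeInv (I : Finset (Fin n)) :
    ((Fin n → Ω) × ({i // i ∈ I} → Ω)) ≃ ((Fin n → Ω) × ({i // i ∈ I} → Ω)) :=
  Function.Involutive.toPerm (fun p => (mergeF I p.2 p.1, fun i => p.1 i)) (by
    intro p
    obtain ⟨x, w⟩ := p
    refine Prod.ext ?_ ?_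
    · exact mergeF_merge I w x
    · funext i
      simp only
      rw [mergeF_mem _ _ i.2])

lemma innerμ_avgF (I : Finset (Fin n)) (a b : (Fin n → Ω) → ℂ) :
    innerμ μ (avgF μ I a) b = innerμ μ a (avgF μ I b) := by
  have e1 : innerμ μ (avgF μ I a) b
      = ∑ p : (Fin n → Ω) × ({i // i ∈ I} → Ω),
          ((wtp μ p.1 * ∏ i, μ (p.2 i) : ℝ) : ℂ)
            * (a (mergeF I p.2 p.1) * starRingEnd ℂ (b p.1)) := by
    rw [Fintype.sum_prod_type]
    simp only [innerμ, avgF]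
    refine Finset.sum_congr rfl fun x _ => ?_
    rw [Finset.mul_sum, Finset.sum_mul]
    refine Finset.sum_congr rfl fun w _ => ?_
    push_cast
    ring
  have e2 : innerμ μ a (avgF μ I b)
      = ∑ p : (Fin n → Ω) × ({i // i ∈ I} → Ω),
          ((wtp μ p.1 * ∏ i, μ (p.2 i) : ℝ) : ℂ)
            * (a p.1 * starRingEnd ℂ (b (mergeF I p.2 p.1))) := by
    rw [Fintype.sum_prod_type]
    simp only [innerμ, avgF]
    refine Finset.sum_congr rfl fun x _ => ?_
    rw [map_sum, Finset.mul_sum]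
    refine Finset.sum_congr rfl fun w _ => ?_
    rw [map_mul, Complex.conj_ofReal]
    push_cast
    ring
  rw [e1, e2, ← Equiv.sum_comp (mergeInv (Ω := Ω) I)
    (fun p : (Fin n → Ω) × ({i // i ∈ I} → Ω) =>
      ((wtp μ p.1 * ∏ i, μ (p.2 i) : ℝ) : ℂ)
        * (a (mergeF I p.2 p.1) * starRingEnd ℂ (b p.1)))]
  refine Finset.sum_congr rfl fun p _ => ?_
  obtain ⟨x, w⟩ := p
  show ((wtp μ (mergeF I w x) * ∏ i : {i // i ∈ I}, μ (x i) : ℝ) : ℂ)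
      * (a (mergeF I (fun i => x i) (mergeF I w x)) * starRingEnd ℂ (b (mergeF I w x))) = _
  rw [mergeF_merge I w x]
  congr 1
  rw [← Complex.ofReal_inj.mpr (wtp_mergeF μ I w x)]

lemma innerμ_zero_right (a : (Fin n → Ω) → ℂ) : innerμ μ a 0 = 0 := by
  simp [innerμ]

lemma innerμ_zero_left (a : (Fin n → Ω) → ℂ) : innerμ μ 0 a = 0 := by
  simp [innerμ]

lemma innerμ_sum_left {α : Type*} (A : Finset α) (F : α → (Fin n → Ω) → ℂ)
    (b : (Fin n → Ω) → ℂ) :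
    innerμ μ (∑ a ∈ A, F a) b = ∑ a ∈ A, innerμ μ (F a) b := by
  simp only [innerμ, Finset.sum_apply, Finset.sum_mul, Finset.mul_sum]
  exact Finset.sum_comm

lemma innerμ_sum_right {α : Type*} (A : Finset α) (a : (Fin n → Ω) → ℂ)
    (G : α → (Fin n → Ω) → ℂ) :
    innerμ μ a (∑ t ∈ A, G t) = ∑ t ∈ A, innerμ μ a (G t) := by
  simp only [innerμ, Finset.sum_apply, map_sum, Finset.mul_sum]
  exact Finset.sum_comm

lemma innerμ_ES_ES (hsum : ∑ a, μ a = 1) {S T : Finset (Fin n)} (hST : S ≠ T)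
    (a b : (Fin n → Ω) → ℂ) : innerμ μ (ES μ S a) (ES μ T b) = 0 := by
  by_cases hsub : S ⊆ T
  · obtain ⟨i, hiT, hiS⟩ : ∃ i ∈ T, i ∉ S := by
      by_contra hcon
      push_neg at hcon
      exact hST (Finset.Subset.antisymm hsub hcon)
    have h1 : avgF μ {i} (ES μ S a) = ES μ S a :=
      avgF_of_junta μ hsum (ES_junta μ S a) (Finset.disjoint_singleton_left.mpr hiS)
    have h2 : avgF μ {i} (ES μ T b) = 0 := avgF_ES_of_mem μ hsum hiT b
    calc innerμ μ (ES μ S a) (ES μ T b)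
        = innerμ μ (avgF μ {i} (ES μ S a)) (ES μ T b) := by rw [h1]
      _ = innerμ μ (ES μ S a) (avgF μ {i} (ES μ T b)) := innerμ_avgF μ {i} _ _
      _ = 0 := by rw [h2, innerμ_zero_right]
  · obtain ⟨i, hiS, hiT⟩ : ∃ i ∈ S, i ∉ T := by
      rcases Finset.not_subset.mp hsub with ⟨i, hiS, hiT⟩
      exact ⟨i, hiS, hiT⟩
    have h1 : avgF μ {i} (ES μ T b) = ES μ T b :=
      avgF_of_junta μ hsum (ES_junta μ T b) (Finset.disjoint_singleton_left.mpr hiT)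
    have h2 : avgF μ {i} (ES μ S a) = 0 := avgF_ES_of_mem μ hsum hiS a
    calc innerμ μ (ES μ S a) (ES μ T b)
        = innerμ μ (ES μ S a) (avgF μ {i} (ES μ T b)) := by rw [h1]
      _ = innerμ μ (avgF μ {i} (ES μ S a)) (ES μ T b) := (innerμ_avgF μ {i} _ _).symm
      _ = 0 := by rw [h2, innerμ_zero_left]

lemma innerμ_sum_ES (hsum : ∑ a, μ a = 1) {A : Finset (Finset (Fin n))}
    (a b : (Fin n → Ω) → ℂ) :
    innerμ μ (∑ S ∈ A, ES μ S a) (∑ T ∈ A, ES μ T b)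
      = ∑ S ∈ A, innerμ μ (ES μ S a) (ES μ S b) := by
  rw [innerμ_sum_left]
  refine Finset.sum_congr rfl fun S hS => ?_
  rw [innerμ_sum_right]
  rw [Finset.sum_eq_single_of_mem S hS]
  intro T hT hTS
  exact innerμ_ES_ES μ hsum (fun h => hTS h.symm) a b

lemma innerμ_self (h : (Fin n → Ω) → ℂ) : innerμ μ h h = ((norm2sq μ h : ℝ) : ℂ) := by
  simp only [innerμ, norm2sq]
  push_cast
  refine Finset.sum_congr rfl fun x _ => ?_
  rw [mul_assoc, Complex.mul_conj]

lemma norm2sq_nonneg (hμ0 : ∀ a, 0 ≤ μ a) (h : (Fin n → Ω) → ℂ) : 0 ≤ norm2sq μ h :=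
  Finset.sum_nonneg fun x _ => mul_nonneg (Finset.prod_nonneg fun i _ => hμ0 _)
    (Complex.normSq_nonneg _)

lemma abs_innerμ_le (hμ0 : ∀ a, 0 ≤ μ a) (a b : (Fin n → Ω) → ℂ) :
    ‖innerμ μ a b‖ ≤ Real.sqrt (norm2sq μ a) * Real.sqrt (norm2sq μ b) := by
  have wnn : ∀ x : Fin n → Ω, 0 ≤ wtp μ x := fun x =>
    Finset.prod_nonneg fun i _ => hμ0 _
  have step1 : ‖innerμ μ a b‖
      ≤ ∑ x, Real.sqrt (wtp μ x * Complex.normSq (a x))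
          * Real.sqrt (wtp μ x * Complex.normSq (b x)) := by
    refine le_trans (norm_sum_le _ _) (le_of_eq (Finset.sum_congr rfl fun x _ => ?_))
    rw [norm_mul, norm_mul, Complex.norm_real, Real.norm_eq_abs, Complex.norm_conj, abs_of_nonneg (wnn x),
      Real.sqrt_mul (wnn x), Real.sqrt_mul (wnn x)]
    simp only [← Complex.norm_def]
    rw [show Real.sqrt (wtp μ x) * ‖a x‖
        * (Real.sqrt (wtp μ x) * ‖b x‖)
        = Real.sqrt (wtp μ x) * Real.sqrt (wtp μ x) * (‖a x‖ * ‖b x‖)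
        from by ring, Real.mul_self_sqrt (wnn x)]
    ring
  refine le_trans step1 ?_
  exact Real.sum_sqrt_mul_sqrt_le _
    (fun x => mul_nonneg (wnn x) (Complex.normSq_nonneg _))
    (fun x => mul_nonneg (wnn x) (Complex.normSq_nonneg _))

lemma ES_degree (hsum : ∑ a, μ a = 1) {L : (Fin n → Ω) → ℂ} {d : ℕ} (hL : DegreeLE L d)
    {S : Finset (Fin n)} (hS : d < S.card) : ES μ S L = 0 := by
  obtain ⟨F, hjunta, hzero, hsumL⟩ := hL
  rw [hsumL, ES_sum μ]
  refine Finset.sum_eq_zero fun T _ => ?_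
  by_cases hTd : d < T.card
  · rw [hzero T hTd]
    exact ES_zero μ S
  · obtain ⟨i, hiS, hiT⟩ : ∃ i ∈ S, i ∉ T := by
      by_contra hc
      push_neg at hc
      have : S.card ≤ T.card := Finset.card_le_card hc
      omega
    exact ES_of_junta μ hsum (hjunta T) hiS hiT

end CorrAux

end CorrAuxSection

open CorrAux

/-- **Correlation with a product function survives random restrictions.** If a 1-bounded
`f : Ω^n → ℂ` satisfies `|⟨f, P·L⟩| ≥ δ` for `P ∈ 𝒫(H,n,Ω)` and a degree-`≤ d` function `L` of
`L²`-norm at most `1`, then a random restriction `(I,y)` with alive-probability `1/(2d)`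
satisfies `|⟨f_{Ī→y}, P_{Ī→y}⟩| ≥ δ/√(2e)` with probability at least `δ²/(2e)`. -/
theorem correlation_after_restriction (Ω : Type) [Fintype Ω] [Nonempty Ω] (μ : Ω → ℝ)
    (hμ : ∀ a, 0 < μ a) (hsum : ∑ a, μ a = 1)
    (H : Type) [AddCommGroup H] [Fintype H]
    (n d : ℕ) (hd : 1 ≤ d)
    (f P L : (Fin n → Ω) → ℂ)
    (hf : ∀ x, ‖f x‖ ≤ 1)
    (hP : IsProductFn H P)
    (hL : DegreeLE L d) (hLnorm : norm2sq μ L ≤ 1)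
    (δ : ℝ) (hδ : 0 < δ)
    (hcorr : δ ≤ ‖innerμ μ f (fun x => P x * L x)‖) :
    δ ^ 2 / (2 * Real.exp 1) ≤
      ∑ I : Finset (Fin n), ∑ y : Fin n → Ω,
        (1 / (2 * (d : ℝ))) ^ I.card * (1 - 1 / (2 * (d : ℝ))) ^ (n - I.card) * wtp μ y *
          (if δ / Real.sqrt (2 * Real.exp 1) ≤
              ‖∑ w : {i // i ∈ I} → Ω,
                ((∏ i, μ (w i) : ℝ) : ℂ) * f (mergeF I w y) *
                  starRingEnd ℂ (P (mergeF I w y))‖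
           then 1 else 0) := by
  classical
  have hd1 : (1:ℝ) ≤ (d:ℝ) := by exact_mod_cast hd
  set q : ℝ := 1 / (2 * (d:ℝ)) with hq
  set ρ : ℝ := 1 - q with hρ
  set t : ℝ := δ / Real.sqrt (2 * Real.exp 1) with ht
  have hq_pos : 0 < q := by
    rw [hq]
    exact div_pos one_pos (by linarith)
  have hq_le : q ≤ 1/2 := by
    rw [hq, div_le_div_iff₀ (by linarith) (by norm_num)]
    linarith
  have hρ0 : 0 ≤ ρ := by rw [hρ]; linarith
  have hρ1 : ρ ≤ 1 := by rw [hρ]; linarith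
  have hqρ : q + ρ = 1 := by rw [hρ]; ring
  set g : (Fin n → Ω) → ℂ := fun x => f x * starRingEnd ℂ (P x) with hg
  obtain ⟨c, u, hc, hu, hPx⟩ := hP
  have habsu : ∀ i s, ‖u i s‖ = 1 := by
    intro i s
    have h1 : ‖u i s‖ ^ Fintype.card H = 1 := by
      rw [← norm_pow, hu i s, norm_one]
    exact (pow_left_inj₀ (norm_nonneg _) zero_le_one Fintype.card_ne_zero).mp
      (by rw [h1, one_pow])
  have habsP : ∀ x, ‖P x‖ = 1 := by
    intro x
    rw [hPx x, norm_mul, hc, one_mul, norm_prod]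
    exact Finset.prod_eq_one fun i _ => habsu i _
  have hgbound : ∀ x, ‖g x‖ ≤ 1 := by
    intro x
    simp only [hg]
    rw [norm_mul, Complex.norm_conj, habsP, mul_one]
    exact hf x
  have hμ0 : ∀ a, 0 ≤ μ a := fun a => (hμ a).le
  have hwnn : ∀ y : Fin n → Ω, 0 ≤ wtp μ y := fun y => Finset.prod_nonneg fun i _ => hμ0 _
  have hwsum : ∑ y : Fin n → Ω, wtp μ y = 1 := by
    simp only [wtp]
    exact sum_prod_weights μ hsum (Fin n)
  have havg_bound : ∀ (I : Finset (Fin n)) (y : Fin n → Ω),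
      ‖avgF μ I g y‖ ≤ 1 := by
    intro I y
    simp only [avgF]
    refine le_trans (norm_sum_le _ _) ?_
    have hterm : ∀ w : {i // i ∈ I} → Ω,
        ‖((∏ i, μ (w i) : ℝ):ℂ) * g (mergeF I w y)‖ ≤ ∏ i, μ (w i) := by
      intro w
      rw [norm_mul, Complex.norm_real, Real.norm_eq_abs, abs_of_nonneg (Finset.prod_nonneg fun i _ => hμ0 _)]
      calc (∏ i, μ (w i)) * ‖g (mergeF I w y)‖ ≤ (∏ i, μ (w i)) * 1 :=
            mul_le_mul_of_nonneg_left (hgbound _) (Finset.prod_nonneg fun i _ => hμ0 _)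
        _ = ∏ i, μ (w i) := mul_one _
    refine le_trans (Finset.sum_le_sum fun w _ => hterm w) ?_
    rw [sum_prod_weights μ hsum]
  set Dset : Finset (Finset (Fin n)) := Finset.univ.filter (fun S => S.card ≤ d) with hDset
  have hA4 : δ^2 ≤ ∑ S ∈ Dset, norm2sq μ (ES μ S g) := by
    have hgL : innerμ μ f (fun x => P x * L x) = innerμ μ g L := by
      simp only [innerμ, hg]
      refine Finset.sum_congr rfl fun x _ => ?_
      rw [map_mul]
      ring
    have hδ1 : δ ≤ ‖innerμ μ g L‖ := by rw [← hgL]; exact hcorr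
    have hdec : innerμ μ g L = ∑ S ∈ Dset, innerμ μ (ES μ S g) (ES μ S L) := by
      calc innerμ μ g L
          = innerμ μ (∑ S : Finset (Fin n), ES μ S g) (∑ S : Finset (Fin n), ES μ S L) := by
            rw [sum_ES μ hsum, sum_ES μ hsum]
        _ = ∑ S : Finset (Fin n), innerμ μ (ES μ S g) (ES μ S L) := innerμ_sum_ES μ hsum g L
        _ = ∑ S ∈ Dset, innerμ μ (ES μ S g) (ES μ S L) := by
            symm
            refine Finset.sum_subset (Finset.subset_univ Dset) ?_
            intro S _ hS
            have hd' : d < S.card := by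
              simp only [hDset, Finset.mem_filter, Finset.mem_univ, true_and, not_le] at hS
              exact hS
            rw [ES_degree μ hsum hL hd', innerμ_zero_right]
    have hQ : ∑ S ∈ Dset, norm2sq μ (ES μ S L) ≤ 1 := by
      have hparse : norm2sq μ L = ∑ S : Finset (Fin n), norm2sq μ (ES μ S L) := by
        have hcx : ((norm2sq μ L : ℝ) : ℂ)
            = ((∑ S : Finset (Fin n), norm2sq μ (ES μ S L) : ℝ) : ℂ) := by
          rw [← innerμ_self μ L]
          calc innerμ μ L L
              = innerμ μ (∑ S : Finset (Fin n), ES μ S L)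
                  (∑ S : Finset (Fin n), ES μ S L) := by
                rw [sum_ES μ hsum]
            _ = ∑ S : Finset (Fin n), innerμ μ (ES μ S L) (ES μ S L) :=
                innerμ_sum_ES μ hsum L L
            _ = _ := by
                push_cast
                exact Finset.sum_congr rfl fun S _ => innerμ_self μ _
        exact_mod_cast hcx
      calc ∑ S ∈ Dset, norm2sq μ (ES μ S L)
          ≤ ∑ S : Finset (Fin n), norm2sq μ (ES μ S L) :=
            Finset.sum_le_sum_of_subset_of_nonneg (Finset.subset_univ _)
              (fun S _ _ => norm2sq_nonneg μ hμ0 _)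
        _ = norm2sq μ L := hparse.symm
        _ ≤ 1 := hLnorm
    have hCS : ‖innerμ μ g L‖
        ≤ Real.sqrt (∑ S ∈ Dset, norm2sq μ (ES μ S g))
          * Real.sqrt (∑ S ∈ Dset, norm2sq μ (ES μ S L)) := by
      rw [hdec]
      refine le_trans (norm_sum_le _ _) ?_
      refine le_trans (Finset.sum_le_sum fun S _ => abs_innerμ_le μ hμ0 _ _) ?_
      exact Real.sum_sqrt_mul_sqrt_le _ (fun S => norm2sq_nonneg μ hμ0 _)
        (fun S => norm2sq_nonneg μ hμ0 _)
    have hsqB : Real.sqrt (∑ S ∈ Dset, norm2sq μ (ES μ S L)) ≤ 1 := by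
      rw [show (1:ℝ) = Real.sqrt 1 from (Real.sqrt_one).symm]
      exact Real.sqrt_le_sqrt hQ
    have hδA : δ ≤ Real.sqrt (∑ S ∈ Dset, norm2sq μ (ES μ S g)) := by
      refine le_trans (le_trans hδ1 hCS) ?_
      calc Real.sqrt (∑ S ∈ Dset, norm2sq μ (ES μ S g))
            * Real.sqrt (∑ S ∈ Dset, norm2sq μ (ES μ S L))
          ≤ Real.sqrt (∑ S ∈ Dset, norm2sq μ (ES μ S g)) * 1 :=
            mul_le_mul_of_nonneg_left hsqB (Real.sqrt_nonneg _)
        _ = _ := mul_one _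
    calc δ^2 ≤ Real.sqrt (∑ S ∈ Dset, norm2sq μ (ES μ S g)) ^ 2 :=
          pow_le_pow_left₀ hδ.le hδA 2
      _ = ∑ S ∈ Dset, norm2sq μ (ES μ S g) :=
          Real.sq_sqrt (Finset.sum_nonneg fun S _ => norm2sq_nonneg μ hμ0 _)
  have hA1 : ∀ I : Finset (Fin n),
      norm2sq μ (avgF μ I g) = ∑ S ∈ Iᶜ.powerset, norm2sq μ (ES μ S g) := by
    intro I
    have hcx : ((norm2sq μ (avgF μ I g) : ℝ) : ℂ)
        = ((∑ S ∈ Iᶜ.powerset, norm2sq μ (ES μ S g) : ℝ) : ℂ) := by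
      rw [← innerμ_self μ (avgF μ I g)]
      calc innerμ μ (avgF μ I g) (avgF μ I g)
          = innerμ μ (∑ S ∈ Iᶜ.powerset, ES μ S g) (∑ S ∈ Iᶜ.powerset, ES μ S g) := by
            rw [← avgF_decomp μ hsum I g]
        _ = ∑ S ∈ Iᶜ.powerset, innerμ μ (ES μ S g) (ES μ S g) := innerμ_sum_ES μ hsum g g
        _ = _ := by
            push_cast
            exact Finset.sum_congr rfl fun S _ => innerμ_self μ _
    exact_mod_cast hcx
  have hA2 : ∀ S : Finset (Fin n),
      ∑ I ∈ Sᶜ.powerset, q ^ I.card * ρ ^ (n - I.card) = ρ ^ S.card := by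
    intro S
    have hcard : S.card ≤ n := by
      calc S.card ≤ Fintype.card (Fin n) := Finset.card_le_univ S
        _ = n := Fintype.card_fin n
    have hsplit : ∀ I ∈ Sᶜ.powerset,
        q ^ I.card * ρ ^ (n - I.card)
          = ρ ^ S.card * (q ^ I.card * ρ ^ (Sᶜ.card - I.card)) := by
      intro I hI
      have h1 : I.card ≤ Sᶜ.card := Finset.card_le_card (Finset.mem_powerset.mp hI)
      have h2 : Sᶜ.card = n - S.card := by rw [Finset.card_compl, Fintype.card_fin]
      have h3 : n - I.card = S.card + (Sᶜ.card - I.card) := by omega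
      rw [h3, pow_add]
      ring
    rw [Finset.sum_congr rfl hsplit, ← Finset.mul_sum]
    have hone : ∑ I ∈ Sᶜ.powerset, q ^ I.card * ρ ^ (Sᶜ.card - I.card) = 1 := by
      have hpa := Finset.prod_add (fun _ : Fin n => q) (fun _ => ρ) Sᶜ
      simp only [Finset.prod_const] at hpa
      rw [hqρ, one_pow] at hpa
      refine Eq.trans ?_ hpa.symm
      refine Finset.sum_congr rfl fun I hI => ?_
      rw [Finset.card_sdiff_of_subset (Finset.mem_powerset.mp hI)]
    rw [hone, mul_one]
  have hrform : ∑ I : Finset (Fin n), (q ^ I.card * ρ ^ (n - I.card)) * norm2sq μ (avgF μ I g)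
      = ∑ S : Finset (Fin n), ρ ^ S.card * norm2sq μ (ES μ S g) := by
    calc ∑ I : Finset (Fin n), (q ^ I.card * ρ ^ (n - I.card)) * norm2sq μ (avgF μ I g)
        = ∑ I : Finset (Fin n), ∑ S : Finset (Fin n),
            (if S ⊆ Iᶜ then (q ^ I.card * ρ ^ (n - I.card)) * norm2sq μ (ES μ S g) else 0) := by
          refine Finset.sum_congr rfl fun I _ => ?_
          rw [hA1 I, Finset.mul_sum, powerset_eq_filter, Finset.sum_filter]
      _ = ∑ S : Finset (Fin n), ∑ I : Finset (Fin n),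
            (if I ⊆ Sᶜ then (q ^ I.card * ρ ^ (n - I.card)) * norm2sq μ (ES μ S g) else 0) := by
          rw [Finset.sum_comm]
          exact Finset.sum_congr rfl fun S _ => Finset.sum_congr rfl fun I _ =>
            if_congr subset_compl_comm rfl rfl
      _ = ∑ S : Finset (Fin n), ρ ^ S.card * norm2sq μ (ES μ S g) := by
          refine Finset.sum_congr rfl fun S _ => ?_
          rw [← Finset.sum_filter, ← powerset_eq_filter, ← Finset.sum_mul, hA2 S]
  have hedb : 1 ≤ Real.exp 1 * ρ ^ d := by
    have h2dpos : (0:ℝ) < 2 * d := by linarith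
    have h2d0 : (2:ℝ) * d ≠ 0 := ne_of_gt h2dpos
    have h2d1 : (0:ℝ) < 2 * d - 1 := by linarith
    have h2d1' : (2:ℝ) * d - 1 ≠ 0 := ne_of_gt h2d1
    have hfact : (1 + 1 / (2 * (d:ℝ) - 1)) * ρ = 1 := by
      rw [hρ, hq]
      field_simp
      ring
    have hAle : (1 + 1 / (2 * (d:ℝ) - 1)) ^ d ≤ Real.exp 1 := by
      have hstep : (1 + 1 / (2 * (d:ℝ) - 1)) ≤ Real.exp (1 / (2 * (d:ℝ) - 1)) := by
        have := Real.add_one_le_exp (1 / (2 * (d:ℝ) - 1))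
        linarith
      calc (1 + 1 / (2 * (d:ℝ) - 1)) ^ d ≤ Real.exp (1 / (2 * (d:ℝ) - 1)) ^ d :=
            pow_le_pow_left₀ (by positivity) hstep d
        _ = Real.exp ((d:ℝ) * (1 / (2 * (d:ℝ) - 1))) := by rw [← Real.exp_nat_mul]
        _ ≤ Real.exp 1 := by
            rw [Real.exp_le_exp, mul_one_div, div_le_one h2d1]
            linarith
    have hprod : (1 + 1 / (2 * (d:ℝ) - 1)) ^ d * ρ ^ d = 1 := by
      rw [← mul_pow, hfact, one_pow]
    have := mul_le_mul_of_nonneg_right hAle (pow_nonneg hρ0 d)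
    linarith
  have hStepA : δ^2 / Real.exp 1
      ≤ ∑ I : Finset (Fin n), (q ^ I.card * ρ ^ (n - I.card)) * norm2sq μ (avgF μ I g) := by
    rw [hrform]
    have h2 : ρ ^ d * ∑ S ∈ Dset, norm2sq μ (ES μ S g)
        ≤ ∑ S : Finset (Fin n), ρ ^ S.card * norm2sq μ (ES μ S g) := by
      calc ρ ^ d * ∑ S ∈ Dset, norm2sq μ (ES μ S g)
          = ∑ S ∈ Dset, ρ ^ d * norm2sq μ (ES μ S g) := Finset.mul_sum _ _ _
        _ ≤ ∑ S ∈ Dset, ρ ^ S.card * norm2sq μ (ES μ S g) := by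
            refine Finset.sum_le_sum fun S hS => ?_
            have hcard : S.card ≤ d := by
              simp only [hDset, Finset.mem_filter] at hS
              exact hS.2
            exact mul_le_mul_of_nonneg_right (pow_le_pow_of_le_one hρ0 hρ1 hcard)
              (norm2sq_nonneg μ hμ0 _)
        _ ≤ ∑ S : Finset (Fin n), ρ ^ S.card * norm2sq μ (ES μ S g) :=
            Finset.sum_le_sum_of_subset_of_nonneg (Finset.subset_univ _)
              (fun S _ _ => mul_nonneg (pow_nonneg hρ0 _) (norm2sq_nonneg μ hμ0 _))
    have h3 : ρ ^ d * δ^2 ≤ ρ ^ d * ∑ S ∈ Dset, norm2sq μ (ES μ S g) :=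
      mul_le_mul_of_nonneg_left hA4 (pow_nonneg hρ0 d)
    have h4 : δ^2 / Real.exp 1 ≤ ρ ^ d * δ^2 := by
      have hinv : 1 / Real.exp 1 ≤ ρ ^ d := by
        rw [div_le_iff₀ (Real.exp_pos 1)]
        linarith
      calc δ^2 / Real.exp 1 = δ^2 * (1 / Real.exp 1) := by ring
        _ ≤ δ^2 * ρ ^ d := mul_le_mul_of_nonneg_left hinv (sq_nonneg δ)
        _ = ρ ^ d * δ^2 := mul_comm _ _
    linarith
  have hStepB : ∀ I : Finset (Fin n), norm2sq μ (avgF μ I g)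
      ≤ t^2 + ∑ y : Fin n → Ω, wtp μ y *
          (if t ≤ ‖avgF μ I g y‖ then 1 else 0) := by
    intro I
    have hpt : ∀ y : Fin n → Ω, wtp μ y * Complex.normSq (avgF μ I g y)
        ≤ wtp μ y * (t^2 + (if t ≤ ‖avgF μ I g y‖ then 1 else 0)) := by
      intro y
      refine mul_le_mul_of_nonneg_left ?_ (hwnn y)
      by_cases hcase : t ≤ ‖avgF μ I g y‖
      · rw [if_pos hcase]
        have h1 : Complex.normSq (avgF μ I g y) ≤ 1 := by
          rw [← Complex.sq_norm]
          nlinarith [havg_bound I y, norm_nonneg (avgF μ I g y)]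
        nlinarith [sq_nonneg t]
      · rw [if_neg hcase]
        push_neg at hcase
        rw [← Complex.sq_norm]
        nlinarith [norm_nonneg (avgF μ I g y)]
    calc norm2sq μ (avgF μ I g)
        = ∑ y : Fin n → Ω, wtp μ y * Complex.normSq (avgF μ I g y) := rfl
      _ ≤ ∑ y : Fin n → Ω, wtp μ y *
            (t^2 + (if t ≤ ‖avgF μ I g y‖ then 1 else 0)) :=
          Finset.sum_le_sum fun y _ => hpt y
      _ = (∑ y : Fin n → Ω, wtp μ y * t^2)
          + ∑ y : Fin n → Ω, wtp μ y *
              (if t ≤ ‖avgF μ I g y‖ then 1 else 0) := by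
          rw [← Finset.sum_add_distrib]
          exact Finset.sum_congr rfl fun y _ => by ring
      _ = t^2 + ∑ y : Fin n → Ω, wtp μ y *
            (if t ≤ ‖avgF μ I g y‖ then 1 else 0) := by
          rw [← Finset.sum_mul, hwsum, one_mul]
  have hind : ∀ (I : Finset (Fin n)) (y : Fin n → Ω),
      (∑ w : {i // i ∈ I} → Ω, ((∏ i, μ (w i) : ℝ):ℂ) * f (mergeF I w y)
        * starRingEnd ℂ (P (mergeF I w y))) = avgF μ I g y := by
    intro I y
    simp only [avgF, hg]
    exact Finset.sum_congr rfl fun w _ => by ring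
  have hgoalRHS : ∑ I : Finset (Fin n), ∑ y : Fin n → Ω,
        q ^ I.card * ρ ^ (n - I.card) * wtp μ y *
          (if t ≤ ‖∑ w : {i // i ∈ I} → Ω,
              ((∏ i, μ (w i) : ℝ) : ℂ) * f (mergeF I w y)
                * starRingEnd ℂ (P (mergeF I w y))‖ then 1 else 0)
      = ∑ I : Finset (Fin n), (q ^ I.card * ρ ^ (n - I.card)) *
          (∑ y : Fin n → Ω, wtp μ y *
            (if t ≤ ‖avgF μ I g y‖ then 1 else 0)) := by
    refine Finset.sum_congr rfl fun I _ => ?_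
    rw [Finset.mul_sum]
    refine Finset.sum_congr rfl fun y _ => ?_
    rw [hind I y]
    ring
  rw [hgoalRHS]
  have hchain : ∑ I : Finset (Fin n), (q ^ I.card * ρ ^ (n - I.card)) * norm2sq μ (avgF μ I g)
      ≤ t^2 + ∑ I : Finset (Fin n), (q ^ I.card * ρ ^ (n - I.card)) *
          (∑ y : Fin n → Ω, wtp μ y *
            (if t ≤ ‖avgF μ I g y‖ then 1 else 0)) := by
    have hWsum : ∑ I : Finset (Fin n), q ^ I.card * ρ ^ (n - I.card) = 1 := by
      have hpa := Finset.prod_add (fun _ : Fin n => q) (fun _ => ρ) Finset.univ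
      simp only [Finset.prod_const] at hpa
      rw [hqρ, one_pow, Finset.powerset_univ] at hpa
      refine Eq.trans ?_ hpa.symm
      refine Finset.sum_congr rfl fun I _ => ?_
      rw [Finset.card_univ_diff, Fintype.card_fin]
    calc ∑ I : Finset (Fin n), (q ^ I.card * ρ ^ (n - I.card)) * norm2sq μ (avgF μ I g)
        ≤ ∑ I : Finset (Fin n), (q ^ I.card * ρ ^ (n - I.card)) *
            (t^2 + ∑ y : Fin n → Ω, wtp μ y *
              (if t ≤ ‖avgF μ I g y‖ then 1 else 0)) :=
          Finset.sum_le_sum fun I _ => mul_le_mul_of_nonneg_left (hStepB I)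
            (mul_nonneg (pow_nonneg hq_pos.le _) (pow_nonneg hρ0 _))
      _ = (∑ I : Finset (Fin n), (q ^ I.card * ρ ^ (n - I.card)) * t^2)
          + ∑ I : Finset (Fin n), (q ^ I.card * ρ ^ (n - I.card)) *
              (∑ y : Fin n → Ω, wtp μ y *
                (if t ≤ ‖avgF μ I g y‖ then 1 else 0)) := by
          rw [← Finset.sum_add_distrib]
          exact Finset.sum_congr rfl fun I _ => by ring
      _ = t^2 + ∑ I : Finset (Fin n), (q ^ I.card * ρ ^ (n - I.card)) *
            (∑ y : Fin n → Ω, wtp μ y *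
              (if t ≤ ‖avgF μ I g y‖ then 1 else 0)) := by
          rw [← Finset.sum_mul, hWsum, one_mul]
  have ht2 : t^2 = δ^2 / (2 * Real.exp 1) := by
    rw [ht, div_pow, Real.sq_sqrt (by positivity)]
  have hfinal := le_trans hStepA hchain
  rw [ht2] at hfinal
  have hee : δ^2 / Real.exp 1 = δ^2 / (2 * Real.exp 1) + δ^2 / (2 * Real.exp 1) := by
    field_simp
    ring
  linarith

end
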